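/- Let m ≥ 3, let G be a finite simple loopless graph, and let f : F Hom(K₂,C_m) → F Hom(K₂,G) be a monotone map satisfying f((B,A)) = τ·f((A,B)) for all (A,B). Define θ_m(f) : ℤ/3m → (nonempty subsets of V(G)) by θ_m(f)(3k) = the second component of f(({k},{k−1})), θ_m(f)(3k+1) = the first component of f(({k},{k−1,k+1})), and θ_m(f)(3k+2) = the second component of f(({k},{k+1})), all indices taken mod m. Then θ_m(f) is a multihomomorphism from C_{3m} to G, and θ_m is equivariant: θ_m(f ∘ R_m) = θ_m(f) ∘ β_{3m}, where R_m is the involution of F Hom(K₂,C_m) applying v ↦ m−1−v (mod m) elementwise to both components of a pair, and β_{3m} is the involution v ↦ 3m−1−v of ℤ/3m. -/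

import Mathlib

open Metric unitInterval

noncomputable section

/-- The unit sphere `S^k` in `ℝ^(k+1)`. -/
abbrev Sph (k : ℕ) : Type := Metric.sphere (0 : EuclideanSpace ℝ (Fin (k+1))) 1

/-- `φ` is a multihomomorphism from `G` to `H`. -/
def IsMultihom {V W : Type*} (G : SimpleGraph V) (H : SimpleGraph W)
    (φ : V → Set W) : Prop :=
  (∀ v, (φ v).Nonempty) ∧ ∀ ⦃u v⦄, G.Adj u v → ∀ a ∈ φ u, ∀ b ∈ φ v, H.Adj a b

/-- The Hom space `|Hom(G,H)|`. -/
def HomSpace {V W : Type*} [Fintype W] (G : SimpleGraph V) (H : SimpleGraph W) : Type _ :=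
  {x : V → stdSimplex ℝ W // IsMultihom G H fun v => {w | (x v : W → ℝ) w ≠ 0}}

instance {V W : Type*} [Fintype W] (G : SimpleGraph V) (H : SimpleGraph W) :
    TopologicalSpace (HomSpace G H) :=
  inferInstanceAs (TopologicalSpace {_x : V → stdSimplex ℝ W // _})

/-- The map `|Hom(G,H)| → |Hom(G',H)|` induced by a graph homomorphism `κ : G' → G`;
for `G' = G` and `κ` an involution this is the induced (left) involution. -/
def pull {V V' W : Type*} [Fintype W] {G : SimpleGraph V} {G' : SimpleGraph V'}
    {H : SimpleGraph W} (κ : G' →g G) (x : HomSpace G H) : HomSpace G' H :=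
  ⟨fun v => x.1 (κ v), fun v => x.2.1 (κ v), fun _ _ huv => x.2.2 (κ.map_adj huv)⟩

/-- The (right) involution of `|Hom(G,H)|` induced by an involution `β` of `H`. -/
def rightAct {V W : Type*} [Fintype W] {G : SimpleGraph V} {H : SimpleGraph W}
    (β : H →g H) (hβ : Function.Involutive β) (x : HomSpace G H) : HomSpace G H :=
  ⟨fun v => ⟨fun b => (x.1 v : W → ℝ) (β b),
    fun b => (x.1 v).2.1 (β b),
    by
      rw [← (x.1 v).2.2]
      exact Fintype.sum_bijective β hβ.bijective _ _ fun b => rfl⟩,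
   fun v => by
      obtain ⟨w, hw⟩ := x.2.1 v
      exact ⟨β w, by change (x.1 v : W → ℝ) (β (β w)) ≠ 0; rw [hβ w]; exact hw⟩,
   fun u v huv a ha b hb => by
      have := x.2.2 huv (β a) ha (β b) hb
      simpa [hβ a, hβ b] using β.map_adj this⟩

/-- The complete graph `K₂` on `{0,1}`. -/
abbrev K2 : SimpleGraph (Fin 2) := SimpleGraph.completeGraph (Fin 2)

/-- The flip involution of `K₂`. -/
def flipK2 : K2 →g K2 :=
  ⟨fun v => 1 - v, fun {a b} h => by fin_cases a <;> fin_cases b <;> simp_all⟩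

/-- The cycle `C_m` on `ℤ/m`. -/
def cycle (m : ℕ) : SimpleGraph (ZMod m) where
  Adj u v := u ≠ v ∧ (u + 1 = v ∨ v + 1 = u)
  symm := ⟨fun _ _ h => ⟨h.1.symm, h.2.symm⟩⟩
  loopless := ⟨fun _ h => h.1 rfl⟩

/-- The involution `v ↦ (m-1) - v = -1 - v` of the cycle `C_m`. -/
def cycFlip (m : ℕ) : cycle m →g cycle m :=
  ⟨fun v => -1 - v, fun {a b} h => by
    refine ⟨fun e => h.1 (sub_right_injective e), ?_⟩
    rcases h.2 with e | e
    · exact Or.inr (by rw [← e]; ring)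
    · exact Or.inl (by rw [← e]; ring)⟩

/-- `X` is `m`-connected: nonempty, path-connected, and `πᵢ X` trivial for `1 ≤ i ≤ m`. -/
def MConnected (m : ℕ) (X : Type*) [TopologicalSpace X] : Prop :=
  Nonempty X ∧ PathConnectedSpace X ∧
    ∀ i, 1 ≤ i → i ≤ m → ∀ x : X, Subsingleton (HomotopyGroup (Fin i) X x)

end

noncomputable section

/-- The poset `F Hom(K₂, H)`: pairs `(A,B)` of nonempty sets of vertices with every
element of `A` adjacent to every element of `B`, ordered by componentwise inclusion. -/
def EdgePairs {W : Type*} (H : SimpleGraph W) : Type _ :=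
  {p : Set W × Set W // p.1.Nonempty ∧ p.2.Nonempty ∧ ∀ a ∈ p.1, ∀ b ∈ p.2, H.Adj a b}

instance {W : Type*} (H : SimpleGraph W) : Preorder (EdgePairs H) where
  le p q := p.1.1 ⊆ q.1.1 ∧ p.1.2 ⊆ q.1.2
  le_refl p := ⟨subset_rfl, subset_rfl⟩
  le_trans p q r h1 h2 := ⟨h1.1.trans h2.1, h1.2.trans h2.2⟩

/-- The involution `τ·(A,B) = (B,A)` of `F Hom(K₂, H)`. -/
def epSwap {W : Type*} {H : SimpleGraph W} (p : EdgePairs H) : EdgePairs H :=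
  ⟨(p.1.2, p.1.1), p.2.2.1, p.2.1, fun a ha b hb => (p.2.2.2 b hb a ha).symm⟩

lemma zmod_one_ne_zero (m : ℕ) (hm : 3 ≤ m) : (1 : ZMod m) ≠ 0 := by
  haveI : NeZero m := ⟨by omega⟩
  haveI : Fact (1 < m) := ⟨by omega⟩
  exact one_ne_zero

lemma cycle_adj_succ (m : ℕ) (hm : 3 ≤ m) (k : ZMod m) : (cycle m).Adj k (k + 1) :=
  ⟨fun e => zmod_one_ne_zero m hm (by linear_combination -e), Or.inl rfl⟩

lemma cycle_adj_pred (m : ℕ) (hm : 3 ≤ m) (k : ZMod m) : (cycle m).Adj k (k - 1) :=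
  ⟨fun e => zmod_one_ne_zero m hm (by linear_combination e), Or.inr (by ring)⟩

/-- The multihomomorphism `({k}, {k-1}) : K₂ → C_m`. -/
def pairA (m : ℕ) (hm : 3 ≤ m) (k : ZMod m) : EdgePairs (cycle m) :=
  ⟨({k}, {k - 1}), Set.singleton_nonempty _, Set.singleton_nonempty _, by
    intro a ha b hb
    rw [Set.mem_singleton_iff] at ha hb
    subst ha; subst hb
    exact cycle_adj_pred m hm _⟩

/-- The multihomomorphism `({k}, {k-1, k+1}) : K₂ → C_m`. -/
def pairB (m : ℕ) (hm : 3 ≤ m) (k : ZMod m) : EdgePairs (cycle m) :=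
  ⟨({k}, {k - 1, k + 1}), Set.singleton_nonempty _, Set.insert_nonempty _ _, by
    intro a ha b hb
    rw [Set.mem_singleton_iff] at ha
    subst ha
    rcases hb with rfl | hb
    · exact cycle_adj_pred m hm a
    · rw [Set.mem_singleton_iff] at hb
      subst hb
      exact cycle_adj_succ m hm a⟩

/-- The multihomomorphism `({k}, {k+1}) : K₂ → C_m`. -/
def pairC (m : ℕ) (hm : 3 ≤ m) (k : ZMod m) : EdgePairs (cycle m) :=
  ⟨({k}, {k + 1}), Set.singleton_nonempty _, Set.singleton_nonempty _, by
    intro a ha b hb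
    rw [Set.mem_singleton_iff] at ha hb
    subst ha; subst hb
    exact cycle_adj_succ m hm _⟩

/-- The map `θ_m`. -/
def theta (m : ℕ) (hm : 3 ≤ m) {V : Type*} (G : SimpleGraph V)
    (f : EdgePairs (cycle m) → EdgePairs G) : ZMod (3 * m) → Set V := fun v =>
  if v.val % 3 = 0 then (f (pairA m hm ((v.val / 3 : ℕ) : ZMod m))).1.2
  else if v.val % 3 = 1 then (f (pairB m hm ((v.val / 3 : ℕ) : ZMod m))).1.1
  else (f (pairC m hm ((v.val / 3 : ℕ) : ZMod m))).1.2

/-- The involution `R_m` of `F Hom(K₂, C_m)`, applying `v ↦ -1-v` elementwise. -/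
def rMap (m : ℕ) : EdgePairs (cycle m) → EdgePairs (cycle m) := fun p =>
  ⟨((fun v => -1 - v) '' p.1.1, (fun v => -1 - v) '' p.1.2),
   p.2.1.image _, p.2.2.1.image _, by
     rintro a ⟨a', ha', rfl⟩ b ⟨b', hb', rfl⟩
     exact (cycFlip m).map_adj (p.2.2.2 a' ha' b' hb')⟩

/-- The map `η_m(φ)` induced by a multihomomorphism `φ : C_m → G`. -/
def etaMap (m : ℕ) {V : Type*} {G : SimpleGraph V} (φ : ZMod m → Set V)
    (hφ : IsMultihom (cycle m) G φ) : EdgePairs (cycle m) → EdgePairs G := fun p =>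
  ⟨(⋃ v ∈ p.1.1, φ v, ⋃ v ∈ p.1.2, φ v),
   by obtain ⟨v0, hv0⟩ := p.2.1
      obtain ⟨w, hw⟩ := hφ.1 v0
      exact ⟨w, Set.mem_biUnion hv0 hw⟩,
   by obtain ⟨v0, hv0⟩ := p.2.2.1
      obtain ⟨w, hw⟩ := hφ.1 v0
      exact ⟨w, Set.mem_biUnion hv0 hw⟩,
   by intro a ha b hb
      rw [Set.mem_iUnion₂] at ha hb
      obtain ⟨u, hu, hau⟩ := ha
      obtain ⟨v, hv, hbv⟩ := hb
      exact hφ.2 (p.2.2.2 u hu v hv) a hau b hbv⟩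

/-- The multihomomorphism `i_m(φ) : C_{3m} → G`. -/
def iMap (m : ℕ) {V : Type*} (φ : ZMod m → Set V) : ZMod (3 * m) → Set V := fun v =>
  if v.val % 3 = 0 then φ (((v.val / 3 : ℕ) : ZMod m) - 1)
  else if v.val % 3 = 1 then φ ((v.val / 3 : ℕ) : ZMod m)
  else φ (((v.val / 3 : ℕ) : ZMod m) + 1)

/-- The element `3k` of `ℤ/3m` associated to `k ∈ ℤ/m`. -/
def tri (m : ℕ) (k : ZMod m) : ZMod (3 * m) := ((3 * k.val : ℕ) : ZMod (3 * m))

end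

section ThetaAux

lemma cast_flip {m j : ℕ} (hj : j < m) : ((m - 1 - j : ℕ) : ZMod m) = -1 - (j : ℕ) := by
  have h2 : ((m-1-j : ℕ) : ZMod m) + ((j+1 : ℕ) : ZMod m) = ((m:ℕ) : ZMod m) := by
    rw [← Nat.cast_add]; congr 1; omega
  rw [ZMod.natCast_self] at h2
  push_cast at h2 ⊢
  linear_combination h2

lemma pairA_le_pairB (m : ℕ) (hm : 3 ≤ m) (k : ZMod m) : pairA m hm k ≤ pairB m hm k :=
  ⟨subset_rfl, fun x hx => Or.inl hx⟩

lemma pairC_le_pairB (m : ℕ) (hm : 3 ≤ m) (k : ZMod m) : pairC m hm k ≤ pairB m hm k :=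
  ⟨subset_rfl, fun x hx => Or.inr hx⟩

lemma pairA_succ (m : ℕ) (hm : 3 ≤ m) (k : ZMod m) :
    pairA m hm (k + 1) = epSwap (pairC m hm k) := by
  apply Subtype.ext
  simp [pairA, pairC, epSwap, add_sub_cancel_right]

lemma rMap_pairA (m : ℕ) (hm : 3 ≤ m) (k : ZMod m) :
    rMap m (pairA m hm k) = pairC m hm (-1 - k) := by
  apply Subtype.ext
  have h : (-1 : ZMod m) - (k - 1) = (-1 - k) + 1 := by ring
  simp [rMap, pairA, pairC, Set.image_singleton, h]

lemma rMap_pairB (m : ℕ) (hm : 3 ≤ m) (k : ZMod m) :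
    rMap m (pairB m hm k) = pairB m hm (-1 - k) := by
  apply Subtype.ext
  have h1 : (-1 : ZMod m) - (k - 1) = (-1 - k) + 1 := by ring
  have h2 : (-1 : ZMod m) - (k + 1) = (-1 - k) - 1 := by ring
  simp only [rMap, pairB, Set.image_singleton, Set.image_insert_eq, h1, h2]
  rw [Set.pair_comm]

lemma rMap_pairC (m : ℕ) (hm : 3 ≤ m) (k : ZMod m) :
    rMap m (pairC m hm k) = pairA m hm (-1 - k) := by
  apply Subtype.ext
  have h : (-1 : ZMod m) - (k + 1) = (-1 - k) - 1 := by ring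
  simp [rMap, pairA, pairC, Set.image_singleton, h]

lemma theta_step (m : ℕ) (hm : 3 ≤ m) {V : Type*} (G : SimpleGraph V)
    (f : EdgePairs (cycle m) → EdgePairs G) (hmono : Monotone f)
    (hodd : ∀ p, f (epSwap p) = epSwap (f p)) (u : ZMod (3 * m)) :
    ∀ a ∈ theta m hm G f u, ∀ b ∈ theta m hm G f (u + 1), G.Adj a b := by
  haveI : NeZero (3 * m) := ⟨by omega⟩
  haveI : Fact (1 < 3 * m) := ⟨by omega⟩
  have hn3 : u.val < 3 * m := ZMod.val_lt u
  have hval1 : (u + 1).val = (u.val + 1) % (3 * m) := by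
    rw [ZMod.val_add, ZMod.val_one]
  have h3 : u.val % 3 = 0 ∨ u.val % 3 = 1 ∨ u.val % 3 = 2 := by omega
  intro a ha b hb
  simp only [theta] at ha hb
  set k : ZMod m := ((u.val / 3 : ℕ) : ZMod m) with hk
  rcases h3 with h | h | h
  · -- u = 3k, u+1 = 3k+1
    have hv1 : (u + 1).val = u.val + 1 := by rw [hval1, Nat.mod_eq_of_lt (by omega)]
    rw [if_pos h] at ha
    rw [if_neg (by omega), if_pos (by omega)] at hb
    have h2 : (u + 1).val / 3 = u.val / 3 := by omega
    rw [h2] at hb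
    have hle := hmono (pairA_le_pairB m hm k)
    exact ((f (pairB m hm k)).2.2.2 b hb a (hle.2 ha)).symm
  · -- u = 3k+1, u+1 = 3k+2
    have hv1 : (u + 1).val = u.val + 1 := by rw [hval1, Nat.mod_eq_of_lt (by omega)]
    rw [if_neg (by omega), if_pos (by omega)] at ha
    rw [if_neg (by omega), if_neg (by omega)] at hb
    have h2 : (u + 1).val / 3 = u.val / 3 := by omega
    rw [h2] at hb
    have hle := hmono (pairC_le_pairB m hm k)
    exact (f (pairB m hm k)).2.2.2 a ha b (hle.2 hb)
  · -- u = 3k+2, u+1 = 3(k+1)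
    rw [if_neg (by omega), if_neg (by omega)] at ha
    have hcast : (((u + 1).val / 3 : ℕ) : ZMod m) = k + 1 := by
      rcases (by omega : u.val + 1 < 3 * m ∨ u.val + 1 = 3 * m) with hc | hc
      · have hv1 : (u + 1).val = u.val + 1 := by rw [hval1, Nat.mod_eq_of_lt hc]
        have h2 : (u + 1).val / 3 = u.val / 3 + 1 := by omega
        rw [h2, hk]; push_cast; ring
      · have hv1 : (u + 1).val = 0 := by rw [hval1, hc, Nat.mod_self]
        have h2 : u.val / 3 = m - 1 := by omega
        rw [hv1, hk, h2]
        have hz : (((m - 1 : ℕ) : ZMod m) + 1 : ZMod m) = 0 := by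
          rw [show (1 : ZMod m) = ((1 : ℕ) : ZMod m) by norm_num, ← Nat.cast_add,
            show m - 1 + 1 = m by omega, ZMod.natCast_self]
        rw [hz]
        simp
    have hmod : (u + 1).val % 3 = 0 := by
      rcases (by omega : u.val + 1 < 3 * m ∨ u.val + 1 = 3 * m) with hc | hc
      · rw [hval1, Nat.mod_eq_of_lt hc]; omega
      · rw [hval1, hc, Nat.mod_self]
    rw [if_pos hmod, hcast, pairA_succ, hodd] at hb
    exact ((f (pairC m hm k)).2.2.2 b hb a ha).symm

end ThetaAux

theorem theta_multihom_and_equivariant (m : ℕ) (hm : 3 ≤ m) {V : Type*} (G : SimpleGraph V)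
    (f : EdgePairs (cycle m) → EdgePairs G) (hmono : Monotone f)
    (hodd : ∀ p, f (epSwap p) = epSwap (f p)) :
    IsMultihom (cycle (3 * m)) G (theta m hm G f) ∧
    theta m hm G (f ∘ rMap m) = fun v : ZMod (3 * m) => theta m hm G f (-1 - v) := by
  haveI : NeZero (3 * m) := ⟨by omega⟩
  constructor
  · constructor
    · intro v
      simp only [theta]
      split_ifs
      exacts [(f _).2.2.1, (f _).2.1, (f _).2.2.1]
    · intro u v huv a ha b hb
      rcases huv.2 with rfl | rfl
      · exact theta_step m hm G f hmono hodd u a ha b hb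
      · exact (theta_step m hm G f hmono hodd v b hb a ha).symm
  · funext v
    have hn3 : v.val < 3 * m := ZMod.val_lt v
    have hvv : ((v.val : ℕ) : ZMod (3 * m)) = v := by simp [ZMod.natCast_val, ZMod.cast_id]
    have hw : (-1 - v : ZMod (3 * m)) = ((3 * m - 1 - v.val : ℕ) : ZMod (3 * m)) := by
      rw [cast_flip hn3, hvv]
    have hwval : (-1 - v).val = 3 * m - 1 - v.val := by
      rw [hw, ZMod.val_cast_of_lt (by omega)]
    have hkm : v.val / 3 < m := by omega
    have hflip : ((m - 1 - v.val / 3 : ℕ) : ZMod m) = -1 - ((v.val / 3 : ℕ) : ZMod m) :=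
      cast_flip hkm
    have h3 : v.val % 3 = 0 ∨ v.val % 3 = 1 ∨ v.val % 3 = 2 := by omega
    simp only [theta, Function.comp]
    rcases h3 with h | h | h
    · rw [if_pos h, rMap_pairA]
      have hm2 : (-1 - v).val % 3 = 2 := by omega
      have hd : (-1 - v).val / 3 = m - 1 - v.val / 3 := by omega
      rw [if_neg (by omega), if_neg (by omega), hd, hflip]
    · rw [if_neg (by omega), if_pos (by omega), rMap_pairB]
      have hm2 : (-1 - v).val % 3 = 1 := by omega
      have hd : (-1 - v).val / 3 = m - 1 - v.val / 3 := by omega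
      rw [if_neg (by omega), if_pos (by omega), hd, hflip]
    · rw [if_neg (by omega), if_neg (by omega), rMap_pairC]
      have hm2 : (-1 - v).val % 3 = 0 := by omega
      have hd : (-1 - v).val / 3 = m - 1 - v.val / 3 := by omega
      rw [if_pos (by omega), hd, hflip]
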